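/- Let k be a field of characteristic zero, n ≥ 2, and λ a partition of n with m = gcd(λ). Then the set of determinants of matrices g ∈ GL_n(k) that commute simultaneously with J_λ, H_λ and Y_λ is exactly the group (k^×)^m of m-th powers in k^×. -/

import Mathlib

open Matrix

/-- Given the list of block sizes `L` and a (0-based) index `i`, return the pair
`(s, pos)` where `s` is the size of the block containing index `i` and `pos` is the
position of `i` within that block. -/
def blockFind : List ℕ → ℕ → ℕ × ℕ
  | [], i => (0, i)
  | s :: L, i => if i < s then (s, i) else blockFind L (i - s)

/-- The list of parts of a partition, in weakly decreasing order. -/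
def partsList {n : ℕ} (μ : Nat.Partition n) : List ℕ :=
  (μ.parts.sort (· ≤ ·)).reverse

/-- The nilpotent Jordan matrix `J_μ` associated to a partition `μ` of `n`. -/
def jordanMat (k : Type) [Field k] {n : ℕ} (μ : Nat.Partition n) :
    Matrix (Fin n) (Fin n) k :=
  fun i j =>
    if (j : ℕ) = (i : ℕ) + 1 ∧
        (blockFind (partsList μ) (i : ℕ)).2 + 1 < (blockFind (partsList μ) (i : ℕ)).1
    then 1 else 0

/-- The semisimple element `H_μ`: block diagonal with blocks
`H_s = diag(s-1, s-3, …, 1-s)` for each part `s` of `μ`, in weakly decreasing order. -/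
def hMat (k : Type) [Field k] {n : ℕ} (μ : Nat.Partition n) :
    Matrix (Fin n) (Fin n) k :=
  fun i j =>
    if i = j then
      ((((blockFind (partsList μ) (i : ℕ)).1 : ℤ) - 1 -
          2 * ((blockFind (partsList μ) (i : ℕ)).2 : ℤ) : ℤ) : k)
    else 0

/-- The lower triangular element `Y_μ`: block diagonal with blocks `Y_s`, where `Y_s`
has `(i+1, i)` entry `i (s - i)` for `1 ≤ i ≤ s - 1` and all other entries zero. -/
def yMat (k : Type) [Field k] {n : ℕ} (μ : Nat.Partition n) :
    Matrix (Fin n) (Fin n) k :=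
  fun i j =>
    if (i : ℕ) = (j : ℕ) + 1 ∧
        (blockFind (partsList μ) (j : ℕ)).2 + 1 < (blockFind (partsList μ) (j : ℕ)).1
    then ((((blockFind (partsList μ) (j : ℕ)).2 + 1) *
        ((blockFind (partsList μ) (j : ℕ)).1 - ((blockFind (partsList μ) (j : ℕ)).2 + 1)) : ℕ) : k)
    else 0

section PL
variable {n : ℕ} (μ : Nat.Partition n)

theorem partsList_mem {x : ℕ} : x ∈ partsList μ ↔ x ∈ μ.parts := by
  rw [partsList, List.mem_reverse, ← Multiset.mem_coe, Multiset.sort_eq]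

theorem partsList_pos : ∀ x ∈ partsList μ, 0 < x := fun x hx =>
  μ.parts_pos ((partsList_mem μ).1 hx)

theorem partsList_sum : (partsList μ).sum = n := by
  rw [partsList, List.sum_reverse]
  have h := congrArg Multiset.sum (Multiset.sort_eq μ.parts (· ≤ ·))
  rw [Multiset.sum_coe] at h
  rw [h, μ.parts_sum]

theorem partsList_gcd_dvd {x : ℕ} (hx : x ∈ partsList μ) : μ.parts.gcd ∣ x :=
  Multiset.gcd_dvd ((partsList_mem μ).1 hx)

end PL

/-- block size at index `a` -/
def Sz {n : ℕ} (μ : Nat.Partition n) (a : ℕ) : ℕ := (blockFind (partsList μ) a).1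
/-- position within block at index `a` -/
def Ps {n : ℕ} (μ : Nat.Partition n) (a : ℕ) : ℕ := (blockFind (partsList μ) a).2

/-- `g` extended to `ℕ` indices by zero -/
def Gn {k : Type} [Field k] {n : ℕ} (g : Matrix (Fin n) (Fin n) k) (a b : ℕ) : k :=
  if h : a < n ∧ b < n then g ⟨a, h.1⟩ ⟨b, h.2⟩ else 0

section Entries
variable {k : Type} [Field k] {n : ℕ} (μ : Nat.Partition n) (g : Matrix (Fin n) (Fin n) k)

theorem mulJ (i j : Fin n) : (g * jordanMat k μ) i j =
    if 1 ≤ (j : ℕ) ∧ Ps μ ((j:ℕ)-1) + 1 < Sz μ ((j:ℕ)-1) then Gn g (i:ℕ) ((j:ℕ)-1) else 0 := by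
  rw [Matrix.mul_apply]
  by_cases hc : 1 ≤ (j : ℕ) ∧ Ps μ ((j:ℕ)-1) + 1 < Sz μ ((j:ℕ)-1)
  · have hj1 : (j:ℕ) - 1 < n := lt_of_le_of_lt (Nat.sub_le _ _) j.isLt
    rw [if_pos hc, Finset.sum_eq_single (⟨(j:ℕ)-1, hj1⟩ : Fin n)]
    · show g i _ * jordanMat k μ _ j = _
      rw [jordanMat]
      rw [if_pos ⟨by simp; omega, hc.2⟩, mul_one, Gn, dif_pos ⟨i.isLt, hj1⟩]
    · intro l _ hl
      rw [jordanMat, if_neg, mul_zero]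
      rintro ⟨h1, -⟩
      exact hl (Fin.ext (by simp only [Fin.val_mk]; omega))
    · simp
  · rw [if_neg hc]
    apply Finset.sum_eq_zero
    intro l _
    rw [jordanMat, if_neg, mul_zero]
    rintro ⟨h1, h2⟩
    apply hc
    refine ⟨by omega, ?_⟩
    rw [show (j:ℕ) - 1 = (l:ℕ) by omega]
    exact h2

theorem Jmul (i j : Fin n)
    (hfit : Ps μ (i:ℕ) + 1 < Sz μ (i:ℕ) → (i:ℕ) + 1 < n) :
    (jordanMat k μ * g) i j =
    if Ps μ (i:ℕ) + 1 < Sz μ (i:ℕ) then Gn g ((i:ℕ)+1) (j:ℕ) else 0 := by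
  rw [Matrix.mul_apply]
  by_cases hc : Ps μ (i:ℕ) + 1 < Sz μ (i:ℕ)
  · have hi1 : (i:ℕ) + 1 < n := hfit hc
    rw [if_pos hc, Finset.sum_eq_single (⟨(i:ℕ)+1, hi1⟩ : Fin n)]
    · show jordanMat k μ i _ * g _ j = _
      rw [jordanMat, if_pos ⟨rfl, hc⟩, one_mul, Gn, dif_pos ⟨hi1, j.isLt⟩]
    · intro l _ hl
      rw [jordanMat, if_neg, zero_mul]
      rintro ⟨h1, -⟩
      exact hl (Fin.ext (by simp only [Fin.val_mk]; omega))
    · simp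
  · rw [if_neg hc]
    apply Finset.sum_eq_zero
    intro l _
    rw [jordanMat, if_neg, zero_mul]
    rintro ⟨h1, h2⟩
    exact hc h2

theorem mulY (i j : Fin n)
    (hfit : Ps μ (j:ℕ) + 1 < Sz μ (j:ℕ) → (j:ℕ) + 1 < n) :
    (g * yMat k μ) i j =
    if Ps μ (j:ℕ) + 1 < Sz μ (j:ℕ) then
      (((Ps μ (j:ℕ) + 1) * (Sz μ (j:ℕ) - (Ps μ (j:ℕ) + 1)) : ℕ) : k) * Gn g (i:ℕ) ((j:ℕ)+1)
    else 0 := by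
  rw [Matrix.mul_apply]
  by_cases hc : Ps μ (j:ℕ) + 1 < Sz μ (j:ℕ)
  · have hj1 : (j:ℕ) + 1 < n := hfit hc
    rw [if_pos hc, Finset.sum_eq_single (⟨(j:ℕ)+1, hj1⟩ : Fin n)]
    · show g i _ * yMat k μ _ j = _
      rw [yMat, if_pos ⟨rfl, hc⟩, Gn, dif_pos ⟨i.isLt, hj1⟩, mul_comm]
      rfl
    · intro l _ hl
      rw [yMat, if_neg, mul_zero]
      rintro ⟨h1, -⟩
      exact hl (Fin.ext (by simp only [Fin.val_mk]; omega))
    · simp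
  · rw [if_neg hc]
    apply Finset.sum_eq_zero
    intro l _
    rw [yMat, if_neg, mul_zero]
    rintro ⟨h1, h2⟩
    exact hc h2

theorem Ymul (i j : Fin n) : (yMat k μ * g) i j =
    if 1 ≤ (i:ℕ) ∧ Ps μ ((i:ℕ)-1) + 1 < Sz μ ((i:ℕ)-1) then
      (((Ps μ ((i:ℕ)-1) + 1) * (Sz μ ((i:ℕ)-1) - (Ps μ ((i:ℕ)-1) + 1)) : ℕ) : k) *
        Gn g ((i:ℕ)-1) (j:ℕ)
    else 0 := by
  rw [Matrix.mul_apply]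
  by_cases hc : 1 ≤ (i:ℕ) ∧ Ps μ ((i:ℕ)-1) + 1 < Sz μ ((i:ℕ)-1)
  · have hi1 : (i:ℕ) - 1 < n := lt_of_le_of_lt (Nat.sub_le _ _) i.isLt
    rw [if_pos hc, Finset.sum_eq_single (⟨(i:ℕ)-1, hi1⟩ : Fin n)]
    · show yMat k μ i _ * g _ j = _
      rw [yMat, if_pos ⟨by simp; omega, hc.2⟩, Gn, dif_pos ⟨hi1, j.isLt⟩]
      rfl
    · intro l _ hl
      rw [yMat, if_neg, zero_mul]
      rintro ⟨h1, -⟩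
      exact hl (Fin.ext (by simp only [Fin.val_mk]; omega))
    · simp
  · rw [if_neg hc]
    apply Finset.sum_eq_zero
    intro l _
    rw [yMat, if_neg, zero_mul]
    rintro ⟨h1, h2⟩
    apply hc
    refine ⟨by omega, ?_⟩
    rw [show (i:ℕ) - 1 = (l:ℕ) by omega]
    exact h2

theorem mulH (i j : Fin n) : (g * hMat k μ) i j =
    g i j * (((Sz μ (j:ℕ) : ℤ) - 1 - 2 * (Ps μ (j:ℕ) : ℤ) : ℤ) : k) := by
  rw [Matrix.mul_apply, Finset.sum_eq_single j]
  · rw [hMat, if_pos rfl]; rfl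
  · intro l _ hl
    rw [hMat, if_neg hl, mul_zero]
  · simp

theorem Hmul (i j : Fin n) : (hMat k μ * g) i j =
    (((Sz μ (i:ℕ) : ℤ) - 1 - 2 * (Ps μ (i:ℕ) : ℤ) : ℤ) : k) * g i j := by
  rw [Matrix.mul_apply, Finset.sum_eq_single i]
  · rw [hMat, if_pos rfl]; rfl
  · intro l _ hl
    rw [hMat, if_neg (Ne.symm hl), zero_mul]
  · simp

end Entries

namespace BF

theorem bf_le : ∀ (L : List ℕ) (i : ℕ), (blockFind L i).2 ≤ i := by
  intro L
  induction L with
  | nil => intro i; simp [blockFind]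
  | cons s T ih =>
    intro i
    by_cases h : i < s
    · simp [blockFind, h]
    · simp only [blockFind, if_neg h]
      exact le_trans (ih (i - s)) (Nat.sub_le _ _)

theorem bf_lt : ∀ (L : List ℕ) (i : ℕ), (∀ x ∈ L, 0 < x) → i < L.sum →
    (blockFind L i).2 < (blockFind L i).1 := by
  intro L
  induction L with
  | nil => intro i _ h; simp at h
  | cons s T ih =>
    intro i hpos h
    by_cases hi : i < s
    · simp only [blockFind, if_pos hi]
      exact hi
    · simp only [blockFind, if_neg hi]
      refine ih _ (fun x hx => hpos x (List.mem_cons_of_mem _ hx)) ?_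
      simp only [List.sum_cons] at h
      omega

theorem bf_mem : ∀ (L : List ℕ) (i : ℕ), i < L.sum → (blockFind L i).1 ∈ L := by
  intro L
  induction L with
  | nil => intro i h; simp at h
  | cons s T ih =>
    intro i h
    by_cases hi : i < s
    · simp [blockFind, hi]
    · simp only [blockFind, if_neg hi]
      simp only [List.sum_cons] at h
      exact List.mem_cons_of_mem _ (ih (i - s) (by omega))

theorem bf_shift : ∀ (L : List ℕ) (i q : ℕ), q < (blockFind L i).1 →
    blockFind L (i - (blockFind L i).2 + q) = ((blockFind L i).1, q) := by
  intro L
  induction L with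
  | nil => intro i q h; simp [blockFind] at h
  | cons s T ih =>
    intro i q h
    by_cases hi : i < s
    · simp only [blockFind, if_pos hi] at h ⊢
      simp only [Nat.sub_self]
      simp [blockFind, h]
    · simp only [blockFind, if_neg hi] at h ⊢
      have hp := bf_le T (i - s)
      have e1 : i - (blockFind T (i - s)).2 + q = s + ((i - s) - (blockFind T (i-s)).2 + q) := by
        omega
      rw [e1]
      have hns : ¬ (s + ((i - s) - (blockFind T (i-s)).2 + q) < s) := by omega
      simp only [blockFind, if_neg hns]
      rw [Nat.add_sub_cancel_left]
      exact ih _ _ h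

theorem bf_fit : ∀ (L : List ℕ) (i : ℕ), i < L.sum →
    i - (blockFind L i).2 + (blockFind L i).1 ≤ L.sum := by
  intro L
  induction L with
  | nil => intro i h; simp at h
  | cons s T ih =>
    intro i h
    simp only [List.sum_cons] at h ⊢
    by_cases hi : i < s
    · simp only [blockFind, if_pos hi]
      omega
    · simp only [blockFind, if_neg hi]
      have := ih (i - s) (by omega)
      have hp := bf_le T (i - s)
      omega

end BF

section Blocks
variable {n : ℕ} (μ : Nat.Partition n)

theorem ps_le (a : ℕ) : Ps μ a ≤ a := BF.bf_le _ a

theorem ps_lt_sz {a : ℕ} (ha : a < n) : Ps μ a < Sz μ a :=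
  BF.bf_lt _ a (partsList_pos μ) (by rwa [partsList_sum])

theorem sz_mem {a : ℕ} (ha : a < n) : Sz μ a ∈ partsList μ :=
  BF.bf_mem _ a (by rwa [partsList_sum])

theorem sz_le_n {a : ℕ} (ha : a < n) : Sz μ a ≤ n := by
  have h := List.single_le_sum (fun x hx => Nat.le_of_lt (partsList_pos μ x hx) |>.trans (le_refl x) |> fun _ => Nat.zero_le x) _ (sz_mem μ ha)
  rwa [partsList_sum] at h

theorem bf_shift' {a : ℕ} (q : ℕ) (hq : q < Sz μ a) :
    blockFind (partsList μ) (a - Ps μ a + q) = (Sz μ a, q) := BF.bf_shift _ a q hq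

theorem sz_shift {a : ℕ} (q : ℕ) (hq : q < Sz μ a) : Sz μ (a - Ps μ a + q) = Sz μ a := by
  rw [Sz, bf_shift' μ q hq]

theorem ps_shift {a : ℕ} (q : ℕ) (hq : q < Sz μ a) : Ps μ (a - Ps μ a + q) = q := by
  rw [Ps, bf_shift' μ q hq]

theorem sz_succ {a : ℕ} (h : Ps μ a + 1 < Sz μ a) : Sz μ (a+1) = Sz μ a := by
  have := sz_shift μ (Ps μ a + 1) h
  rwa [show a - Ps μ a + (Ps μ a + 1) = a + 1 by have := ps_le μ a; omega] at this

theorem ps_succ {a : ℕ} (h : Ps μ a + 1 < Sz μ a) : Ps μ (a+1) = Ps μ a + 1 := by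
  have := ps_shift μ (Ps μ a + 1) h
  rwa [show a - Ps μ a + (Ps μ a + 1) = a + 1 by have := ps_le μ a; omega] at this

theorem sz_pred {a : ℕ} (ha : a < n) (h : 1 ≤ Ps μ a) : Sz μ (a-1) = Sz μ a := by
  have h2 : Ps μ a - 1 < Sz μ a := lt_of_le_of_lt (Nat.sub_le _ _) (ps_lt_sz μ ha)
  have := sz_shift μ (Ps μ a - 1) h2
  rwa [show a - Ps μ a + (Ps μ a - 1) = a - 1 by have := ps_le μ a; omega] at this

theorem ps_pred {a : ℕ} (ha : a < n) (h : 1 ≤ Ps μ a) : Ps μ (a-1) = Ps μ a - 1 := by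
  have h2 : Ps μ a - 1 < Sz μ a := lt_of_le_of_lt (Nat.sub_le _ _) (ps_lt_sz μ ha)
  have := ps_shift μ (Ps μ a - 1) h2
  rwa [show a - Ps μ a + (Ps μ a - 1) = a - 1 by have := ps_le μ a; omega] at this

theorem ps_pred_not {a : ℕ} (ha : 1 ≤ a) (h0 : Ps μ a = 0) :
    ¬ (Ps μ (a-1) + 1 < Sz μ (a-1)) := by
  intro hlt
  have := ps_succ μ hlt
  rw [show a - 1 + 1 = a by omega] at this
  omega

theorem fit {a : ℕ} (ha : a < n) (h : Ps μ a + 1 < Sz μ a) : a + 1 < n := by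
  have h1 := BF.bf_fit (partsList μ) a (by rwa [partsList_sum])
  rw [partsList_sum] at h1
  have := ps_le μ a
  change a - Ps μ a + Sz μ a ≤ n at h1
  omega

end Blocks

section Relations
variable {k : Type} [Field k] [CharZero k] {n : ℕ} {μ : Nat.Partition n}
  {g : Matrix (Fin n) (Fin n) k}

theorem RJ (hJ : g * jordanMat k μ = jordanMat k μ * g) {a b : ℕ} (ha : a < n) (hb : b < n) :
    (if 1 ≤ b ∧ Ps μ (b-1) + 1 < Sz μ (b-1) then Gn g a (b-1) else 0)
      = (if Ps μ a + 1 < Sz μ a then Gn g (a+1) b else 0) := by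
  have h := congrFun (congrFun hJ ⟨a, ha⟩) ⟨b, hb⟩
  rw [mulJ μ g ⟨a, ha⟩ ⟨b, hb⟩, Jmul μ g ⟨a, ha⟩ ⟨b, hb⟩ (fun h' => fit μ ha h')] at h
  exact h

theorem RY (hY : g * yMat k μ = yMat k μ * g) {a b : ℕ} (ha : a < n) (hb : b < n) :
    (if Ps μ b + 1 < Sz μ b then
        (((Ps μ b + 1) * (Sz μ b - (Ps μ b + 1)) : ℕ) : k) * Gn g a (b+1) else 0)
      = (if 1 ≤ a ∧ Ps μ (a-1) + 1 < Sz μ (a-1) then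
        (((Ps μ (a-1) + 1) * (Sz μ (a-1) - (Ps μ (a-1) + 1)) : ℕ) : k) * Gn g (a-1) b
        else 0) := by
  have h := congrFun (congrFun hY ⟨a, ha⟩) ⟨b, hb⟩
  rw [mulY μ g ⟨a, ha⟩ ⟨b, hb⟩ (fun h' => fit μ hb h'), Ymul μ g ⟨a, ha⟩ ⟨b, hb⟩] at h
  exact h

theorem RHW (hH : g * hMat k μ = hMat k μ * g) {a b : ℕ} (ha : a < n) (hb : b < n)
    (hne : Gn g a b ≠ 0) :
    (Sz μ a : ℤ) - 2 * Ps μ a = (Sz μ b : ℤ) - 2 * Ps μ b := by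
  have h := congrFun (congrFun hH ⟨a, ha⟩) ⟨b, hb⟩
  rw [mulH μ g ⟨a, ha⟩ ⟨b, hb⟩, Hmul μ g ⟨a, ha⟩ ⟨b, hb⟩] at h
  have hg : g ⟨a, ha⟩ ⟨b, hb⟩ = Gn g a b := by rw [Gn, dif_pos ⟨ha, hb⟩]
  rw [hg, mul_comm] at h
  have h2 := mul_right_cancel₀ hne h
  have h3 := Int.cast_injective (α := k) h2
  simp only [Fin.val_mk] at h3
  omega

theorem vanish1 (hJ : g * jordanMat k μ = jordanMat k μ * g) :
    ∀ q a b, a < n → b < n →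
    (Sz μ a : ℤ) - 2 * Ps μ a = (Sz μ b : ℤ) - 2 * Ps μ b → Sz μ b < Sz μ a → Ps μ b = q →
    Gn g a b = 0 := by
  intro q
  induction q with
  | zero =>
    intro a b ha hb hw hs hq
    have hpa : 1 ≤ Ps μ a := by omega
    have h1a : 1 ≤ a := le_trans hpa (ps_le μ a)
    have hsz := sz_pred μ ha hpa
    have hps := ps_pred μ ha hpa
    have hrel := RJ hJ (a := a - 1) (b := b) (lt_of_le_of_lt (Nat.sub_le _ _) ha) hb
    rw [if_pos (show Ps μ (a-1) + 1 < Sz μ (a-1) by rw [hsz, hps]; have := ps_lt_sz μ ha; omega),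
      show a - 1 + 1 = a by omega] at hrel
    rw [← hrel]
    by_cases hb1 : 1 ≤ b
    · rw [if_neg]
      rintro ⟨-, hcond⟩
      exact ps_pred_not μ hb1 hq hcond
    · rw [if_neg (by omega)]
  | succ q ih =>
    intro a b ha hb hw hs hq
    have hpa : 1 ≤ Ps μ a := by omega
    have h1a : 1 ≤ a := le_trans hpa (ps_le μ a)
    have h1b : 1 ≤ b := le_trans (by omega) (ps_le μ b)
    have hsz := sz_pred μ ha hpa
    have hps := ps_pred μ ha hpa
    have hszb := sz_pred μ hb (by omega)
    have hpsb := ps_pred μ hb (by omega)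
    have hrel := RJ hJ (a := a - 1) (b := b) (lt_of_le_of_lt (Nat.sub_le _ _) ha) hb
    rw [if_pos (show Ps μ (a-1) + 1 < Sz μ (a-1) by rw [hsz, hps]; have := ps_lt_sz μ ha; omega),
      show a - 1 + 1 = a by omega] at hrel
    rw [← hrel]
    by_cases hcond : Ps μ (b-1) + 1 < Sz μ (b-1)
    · rw [if_pos ⟨h1b, hcond⟩]
      exact ih (a-1) (b-1) (lt_of_le_of_lt (Nat.sub_le _ _) ha)
        (lt_of_le_of_lt (Nat.sub_le _ _) hb)
        (by rw [hsz, hps, hszb, hpsb]; push_cast; omega)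
        (by omega) (by omega)
    · rw [if_neg (by tauto)]

theorem vanish2 (hY : g * yMat k μ = yMat k μ * g) :
    ∀ p a b, a < n → b < n →
    (Sz μ a : ℤ) - 2 * Ps μ a = (Sz μ b : ℤ) - 2 * Ps μ b → Sz μ a < Sz μ b → Ps μ a = p →
    Gn g a b = 0 := by
  intro p
  induction p with
  | zero =>
    intro a b ha hb hw hs hp
    have hpb : 1 ≤ Ps μ b := by omega
    have h1b : 1 ≤ b := le_trans hpb (ps_le μ b)
    have hszb := sz_pred μ hb hpb
    have hpsb := ps_pred μ hb hpb
    have hrel := RY hY (a := a) (b := b - 1) ha (lt_of_le_of_lt (Nat.sub_le _ _) hb)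
    rw [if_pos (show Ps μ (b-1) + 1 < Sz μ (b-1) by rw [hszb, hpsb]; have := ps_lt_sz μ hb; omega),
      show b - 1 + 1 = b by omega] at hrel
    have hy : (((Ps μ (b-1) + 1) * (Sz μ (b-1) - (Ps μ (b-1) + 1)) : ℕ) : k) ≠ 0 := by
      rw [Nat.cast_ne_zero]
      have h1 := ps_lt_sz μ hb
      rw [hszb, hpsb]
      have : Ps μ b - 1 + 1 = Ps μ b := by omega
      rw [this]
      exact Nat.mul_ne_zero (by omega) (by omega)
    rw [if_neg] at hrel
    · exact (mul_eq_zero.1 hrel).resolve_left hy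
    · rintro ⟨h1a, hcond⟩
      exact ps_pred_not μ h1a hp hcond
  | succ p ih =>
    intro a b ha hb hw hs hp
    have hpb : 1 ≤ Ps μ b := by omega
    have h1b : 1 ≤ b := le_trans hpb (ps_le μ b)
    have h1a : 1 ≤ a := le_trans (by omega) (ps_le μ a)
    have hszb := sz_pred μ hb hpb
    have hpsb := ps_pred μ hb hpb
    have hsza := sz_pred μ ha (by omega)
    have hpsa := ps_pred μ ha (by omega)
    have hrel := RY hY (a := a) (b := b - 1) ha (lt_of_le_of_lt (Nat.sub_le _ _) hb)
    rw [if_pos (show Ps μ (b-1) + 1 < Sz μ (b-1) by rw [hszb, hpsb]; have := ps_lt_sz μ hb; omega),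
      show b - 1 + 1 = b by omega] at hrel
    have hy : (((Ps μ (b-1) + 1) * (Sz μ (b-1) - (Ps μ (b-1) + 1)) : ℕ) : k) ≠ 0 := by
      rw [Nat.cast_ne_zero]
      have h1 := ps_lt_sz μ hb
      rw [hszb, hpsb]
      have : Ps μ b - 1 + 1 = Ps μ b := by omega
      rw [this]
      exact Nat.mul_ne_zero (by omega) (by omega)
    by_cases hcond : Ps μ (a-1) + 1 < Sz μ (a-1)
    · rw [if_pos ⟨h1a, hcond⟩] at hrel
      have hz : Gn g (a-1) (b-1) = 0 :=
        ih (a-1) (b-1) (lt_of_le_of_lt (Nat.sub_le _ _) ha)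
          (lt_of_le_of_lt (Nat.sub_le _ _) hb)
          (by rw [hsza, hpsa, hszb, hpsb]; push_cast; omega)
          (by omega) (by omega)
      rw [hz, mul_zero] at hrel
      exact (mul_eq_zero.1 hrel).resolve_left hy
    · rw [if_neg (by tauto)] at hrel
      exact (mul_eq_zero.1 hrel).resolve_left hy

theorem vanish (hJ : g * jordanMat k μ = jordanMat k μ * g)
    (hH : g * hMat k μ = hMat k μ * g) (hY : g * yMat k μ = yMat k μ * g)
    {a b : ℕ} (ha : a < n) (hb : b < n) (hne : Sz μ a ≠ Sz μ b ∨ Ps μ a ≠ Ps μ b) :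
    Gn g a b = 0 := by
  by_contra h0
  have hw := RHW hH ha hb h0
  rcases Nat.lt_trichotomy (Sz μ a) (Sz μ b) with hlt | heq | hgt
  · exact h0 (vanish2 hY (Ps μ a) a b ha hb hw hlt rfl)
  · have : Ps μ a = Ps μ b := by omega
    tauto
  · exact h0 (vanish1 hJ (Ps μ b) a b ha hb hw hgt rfl)

theorem const (hJ : g * jordanMat k μ = jordanMat k μ * g) :
    ∀ p a b, a < n → b < n → Sz μ a = Sz μ b → Ps μ a = p → Ps μ b = p →
    Gn g a b = Gn g (a - p) (b - p) := by
  intro p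
  induction p with
  | zero => intro a b _ _ _ _ _; simp
  | succ p ih =>
    intro a b ha hb hs hpa hpb
    have h1a : 1 ≤ a := le_trans (by omega) (ps_le μ a)
    have h1b : 1 ≤ b := le_trans (by omega) (ps_le μ b)
    have hsza := sz_pred μ ha (by omega)
    have hpsa := ps_pred μ ha (by omega)
    have hszb := sz_pred μ hb (by omega)
    have hpsb := ps_pred μ hb (by omega)
    have hrel := RJ hJ (a := a - 1) (b := b) (lt_of_le_of_lt (Nat.sub_le _ _) ha) hb
    rw [if_pos (show Ps μ (a-1) + 1 < Sz μ (a-1) by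
        rw [hsza, hpsa]; have := ps_lt_sz μ ha; omega),
      show a - 1 + 1 = a by omega,
      if_pos (show 1 ≤ b ∧ Ps μ (b-1) + 1 < Sz μ (b-1) by
        refine ⟨h1b, ?_⟩; rw [hszb, hpsb]; have := ps_lt_sz μ hb; omega)] at hrel
    rw [← hrel, ih (a-1) (b-1) (lt_of_le_of_lt (Nat.sub_le _ _) ha)
      (lt_of_le_of_lt (Nat.sub_le _ _) hb) (by rw [hsza, hszb, hs]) (by omega) (by omega),
      show a - 1 - p = a - (p+1) by omega, show b - 1 - p = b - (p+1) by omega]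

end Relations

section Det
variable {k : Type} [Field k] [CharZero k] {n : ℕ} {μ : Nat.Partition n}

theorem fitN (μ : Nat.Partition n) {a : ℕ} (ha : a < n) : a - Ps μ a + Sz μ a ≤ n := by
  have h1 := BF.bf_fit (partsList μ) a (by rwa [partsList_sum])
  rwa [partsList_sum] at h1

/-- the grading function for the block decomposition -/
def bfun (μ : Nat.Partition n) : Fin n → (Fin (n+1)) ×ₗ (Fin (n+1)) := fun i =>
  toLex (⟨Sz μ (i:ℕ), Nat.lt_succ_of_le (sz_le_n μ i.isLt)⟩,
    ⟨Ps μ (i:ℕ), Nat.lt_succ_of_le (le_of_lt (lt_of_lt_of_le (ps_lt_sz μ i.isLt) (sz_le_n μ i.isLt)))⟩)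

theorem bfun_eq_iff (μ : Nat.Partition n) (i : Fin n) (s p : Fin (n+1)) :
    bfun μ i = toLex (s, p) ↔ Sz μ (i:ℕ) = (s:ℕ) ∧ Ps μ (i:ℕ) = (p:ℕ) := by
  rw [bfun, toLex.injective.eq_iff, Prod.mk.injEq, Fin.ext_iff, Fin.ext_iff]

theorem hard {g : Matrix (Fin n) (Fin n) k} (hn : 2 ≤ n) (hg : IsUnit g)
    (hJ : g * jordanMat k μ = jordanMat k μ * g)
    (hH : g * hMat k μ = hMat k μ * g)
    (hY : g * yMat k μ = yMat k μ * g) :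
    ∃ c : k, c ≠ 0 ∧ g.det = c ^ μ.parts.gcd := by
  classical
  set m := μ.parts.gcd with hm
  -- m ≠ 0
  have hm0 : m ≠ 0 := by
    intro h0
    have hne : μ.parts ≠ 0 := by
      intro hp
      have := μ.parts_sum
      rw [hp] at this
      simp at this
      omega
    obtain ⟨x, hx⟩ := Multiset.exists_mem_of_ne_zero hne
    have hx0 := μ.parts_pos hx
    have := (Multiset.gcd_eq_zero_iff μ.parts).1 h0 x hx
    omega
  -- block triangularity
  have hBT : BlockTriangular g (bfun μ) := by
    intro i j hij
    have hne : Sz μ (i:ℕ) ≠ Sz μ (j:ℕ) ∨ Ps μ (i:ℕ) ≠ Ps μ (j:ℕ) := by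
      by_contra hcon
      push_neg at hcon
      have : bfun μ j = bfun μ i := by
        rw [bfun, bfun, toLex.injective.eq_iff, Prod.mk.injEq]
        exact ⟨Fin.ext hcon.1.symm, Fin.ext hcon.2.symm⟩
      rw [this] at hij
      exact lt_irrefl _ hij
    have := vanish hJ hH hY i.isLt j.isLt hne
    rwa [Gn, dif_pos ⟨i.isLt, j.isLt⟩, Fin.eta, Fin.eta] at this
  have hdet := hBT.det_fintype
  -- the per-class determinants
  set D : Fin (n+1) → Fin (n+1) → k :=
    fun s p => (g.toSquareBlock (bfun μ) (toLex (s, p))).det with hD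
  have hdet2 : g.det = ∏ s : Fin (n+1), ∏ p : Fin (n+1), D s p := by
    rw [hdet, ← Equiv.prod_comp (toLex : (Fin (n+1) × Fin (n+1)) ≃ _)
      (fun a => (g.toSquareBlock (bfun μ) a).det), Fintype.prod_prod_type]
  -- empty classes
  have hempty : ∀ s p : Fin (n+1), (s:ℕ) ≤ (p:ℕ) → IsEmpty {i // bfun μ i = toLex (s, p)} := by
    intro s p hsp
    constructor
    rintro ⟨i, hi⟩
    rw [bfun_eq_iff] at hi
    have := ps_lt_sz μ i.isLt
    omega
  -- constancy across positions
  have hconst : ∀ s p : Fin (n+1), (p:ℕ) < (s:ℕ) → D s p = D s 0 := by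
    intro s p hps
    -- the equivalence between the (s,p) fiber and the (s,0) fiber
    have key : ∀ (i : Fin n), bfun μ i = toLex (s, p) →
        ((i:ℕ) - (p:ℕ) < n ∧ Sz μ ((i:ℕ) - (p:ℕ)) = (s:ℕ) ∧ Ps μ ((i:ℕ) - (p:ℕ)) = 0) := by
      intro i hi
      rw [bfun_eq_iff] at hi
      have h1 : (i:ℕ) - (p:ℕ) < n := lt_of_le_of_lt (Nat.sub_le _ _) i.isLt
      have hsz0 : (0:ℕ) < Sz μ (i:ℕ) := by omega
      have e1 : (i:ℕ) - Ps μ (i:ℕ) + 0 = (i:ℕ) - (p:ℕ) := by rw [hi.2, Nat.add_zero]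
      have h2 := sz_shift μ (a := (i:ℕ)) 0 hsz0
      have h3 := ps_shift μ (a := (i:ℕ)) 0 hsz0
      rw [e1] at h2 h3
      exact ⟨h1, by rw [h2, hi.1], h3⟩
    have key2 : ∀ (j : Fin n), bfun μ j = toLex (s, 0) →
        ((j:ℕ) + (p:ℕ) < n ∧ Sz μ ((j:ℕ) + (p:ℕ)) = (s:ℕ) ∧ Ps μ ((j:ℕ) + (p:ℕ)) = (p:ℕ)) := by
      intro j hj
      rw [bfun_eq_iff] at hj
      simp only [Fin.val_zero] at hj
      have hps' : (p:ℕ) < Sz μ (j:ℕ) := by omega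
      have e1 : (j:ℕ) - Ps μ (j:ℕ) + (p:ℕ) = (j:ℕ) + (p:ℕ) := by rw [hj.2]; omega
      have h2 := sz_shift μ (a := (j:ℕ)) (p:ℕ) hps'
      have h3 := ps_shift μ (a := (j:ℕ)) (p:ℕ) hps'
      rw [e1] at h2 h3
      have hfit := fitN μ j.isLt
      rw [hj.2] at hfit
      exact ⟨by omega, by rw [h2, hj.1], h3⟩
    let E : {i // bfun μ i = toLex (s, p)} ≃ {i // bfun μ i = toLex (s, 0)} :=
      { toFun := fun i => ⟨⟨(i.1:ℕ) - (p:ℕ), (key i.1 i.2).1⟩, by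
          rw [bfun_eq_iff]
          exact ⟨(key i.1 i.2).2.1, (key i.1 i.2).2.2⟩⟩
        invFun := fun j => ⟨⟨(j.1:ℕ) + (p:ℕ), (key2 j.1 j.2).1⟩, by
          rw [bfun_eq_iff]
          exact ⟨(key2 j.1 j.2).2.1, (key2 j.1 j.2).2.2⟩⟩
        left_inv := fun i => by
          have hi := i.2
          rw [bfun_eq_iff] at hi
          have hle : (p:ℕ) ≤ (i.1:ℕ) := hi.2 ▸ ps_le μ (i.1:ℕ)
          exact Subtype.ext (Fin.ext (by simp only [Fin.val_mk]; omega))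
        right_inv := fun j => Subtype.ext (Fin.ext (by simp only [Fin.val_mk]; omega)) }
    have hsub : g.toSquareBlock (bfun μ) (toLex (s, p))
        = (g.toSquareBlock (bfun μ) (toLex (s, 0))).submatrix E E := by
      ext i j
      have hi := i.2
      have hj := j.2
      rw [bfun_eq_iff] at hi hj
      have h1 := const hJ (p:ℕ) (i.1:ℕ) (j.1:ℕ) i.1.isLt j.1.isLt
        (by rw [hi.1, hj.1]) hi.2 hj.2
      rw [Gn, dif_pos ⟨i.1.isLt, j.1.isLt⟩, Gn,
        dif_pos ⟨lt_of_le_of_lt (Nat.sub_le _ _) i.1.isLt,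
          lt_of_le_of_lt (Nat.sub_le _ _) j.1.isLt⟩] at h1
      simp only [toSquareBlock_def, Matrix.submatrix_apply, Matrix.of_apply]
      convert h1 using 2 <;> exact Fin.ext (by simp [E])
    rw [hD]
    simp only
    rw [hsub, Matrix.det_submatrix_equiv_self]
  -- product over positions
  have hprodp : ∀ s : Fin (n+1), (∏ p : Fin (n+1), D s p) = (D s 0) ^ (s:ℕ) := by
    intro s
    have : ∀ p : Fin (n+1), D s p = if (p:ℕ) < (s:ℕ) then D s 0 else 1 := by
      intro p
      by_cases hps : (p:ℕ) < (s:ℕ)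
      · rw [if_pos hps, hconst s p hps]
      · rw [if_neg hps]
        have := hempty s p (by omega)
        exact Matrix.det_isEmpty
    rw [Finset.prod_congr rfl (fun p _ => this p), Finset.prod_ite, Finset.prod_const,
      Finset.prod_const_one, mul_one]
    congr 1
    have : Finset.filter (fun p : Fin (n+1) => (p:ℕ) < (s:ℕ)) Finset.univ
        = Finset.Iio s := by
      ext p
      simp only [Finset.mem_filter, Finset.mem_Iio, Finset.mem_univ, true_and, Fin.lt_def]
    rw [this, Fin.card_Iio]
  -- finish
  have hdet3 : g.det = ∏ s : Fin (n+1), (D s 0) ^ (s:ℕ) :=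
    hdet2.trans (Finset.prod_congr rfl (fun s _ => hprodp s))
  set e : Fin (n+1) → k := fun s => if m ∣ (s:ℕ) then (D s 0) ^ ((s:ℕ)/m) else 1 with he
  have hterm : ∀ s : Fin (n+1), (D s 0) ^ (s:ℕ) = (e s) ^ m := by
    intro s
    by_cases hdvd : m ∣ (s:ℕ)
    · rw [he]
      simp only [if_pos hdvd]
      rw [← pow_mul, Nat.div_mul_cancel hdvd]
    · have hemp : IsEmpty {i // bfun μ i = toLex (s, (0 : Fin (n+1)))} := by
        constructor
        rintro ⟨i, hi⟩
        rw [bfun_eq_iff] at hi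
        exact hdvd (hi.1 ▸ partsList_gcd_dvd μ (sz_mem μ i.isLt))
      have hD1 : D s 0 = 1 := Matrix.det_isEmpty
      rw [hD1, one_pow, he]
      simp only [if_neg hdvd]
      rw [one_pow]
  have hdet4 : g.det = (∏ s : Fin (n+1), e s) ^ m := by
    rw [hdet3, Finset.prod_congr rfl (fun s _ => hterm s), ← Finset.prod_pow]
  refine ⟨∏ s : Fin (n+1), e s, ?_, hdet4⟩
  intro hc0
  have hdne : g.det ≠ 0 := (Matrix.isUnit_iff_isUnit_det g |>.1 hg).ne_zero
  rw [hdet4, hc0, zero_pow hm0] at hdne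
  exact hdne rfl

end Det

namespace BF

/-- Block coefficient function: `xi A L i` is the coefficient (from `A`) of the block of
`L` containing index `i`. -/
def xi : List ℤ → List ℕ → ℕ → ℤ
  | _, [], _ => 0
  | [], _ :: _, _ => 0
  | a :: A, s :: T, i => if i < s then a else xi A T (i - s)

theorem xi_nilA : ∀ (L : List ℕ) (i : ℕ), xi [] L i = 0 := by
  intro L i; cases L <;> simp [xi]

theorem xi_shift : ∀ (L : List ℕ) (A : List ℤ) (i q : ℕ), q < (blockFind L i).1 →
    xi A L (i - (blockFind L i).2 + q) = xi A L i := by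
  intro L
  induction L with
  | nil => intro A i q h; simp [blockFind] at h
  | cons s T ih =>
    intro A i q h
    cases A with
    | nil => rw [xi_nilA, xi_nilA]
    | cons a A' =>
      by_cases hi : i < s
      · simp only [blockFind, if_pos hi] at h ⊢
        simp only [Nat.sub_self, Nat.zero_add, xi, if_pos h, if_pos hi]
      · simp only [blockFind, if_neg hi] at h ⊢
        have hp := bf_le T (i - s)
        have e1 : i - (blockFind T (i - s)).2 + q
            = s + ((i - s) - (blockFind T (i-s)).2 + q) := by omega
        rw [e1]
        have hns : ¬ (s + ((i - s) - (blockFind T (i-s)).2 + q) < s) := by omega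
        simp only [xi, if_neg hns, if_neg hi, Nat.add_sub_cancel_left]
        exact ih A' _ _ h

/-- sum of `xi` over all of `range L.sum` equals the weighted sum `∑ s_b * a_b`. -/
theorem xi_sum : ∀ (L : List ℕ) (A : List ℤ),
    (∑ i ∈ Finset.range L.sum, xi A L i)
      = (List.zipWith (fun (s : ℕ) (a : ℤ) => (s : ℤ) * a) L A).sum := by
  intro L
  induction L with
  | nil => intro A; simp [xi]
  | cons s T ih =>
    intro A
    cases A with
    | nil => simp [xi_nilA]
    | cons a A' =>
      simp only [List.sum_cons, List.zipWith_cons_cons]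
      rw [Finset.sum_range_add]
      have h1 : ∀ i ∈ Finset.range s, xi (a :: A') (s :: T) i = a := by
        intro i hi
        simp only [Finset.mem_range] at hi
        simp [xi, hi]
      rw [Finset.sum_congr rfl h1]
      have h2 : ∀ i ∈ Finset.range T.sum, xi (a :: A') (s :: T) (s + i) = xi A' T i := by
        intro i hi
        have : ¬ (s + i < s) := by omega
        simp [xi, this]
      rw [Finset.sum_congr rfl h2, ih A']
      simp [mul_comm]

def lgcd (L : List ℕ) : ℕ := L.foldr Nat.gcd 0

theorem zip_map_mul : ∀ (T : List ℕ) (A : List ℤ) (y : ℤ),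
    (List.zipWith (fun (s : ℕ) (a : ℤ) => (s : ℤ) * a) T (A.map (· * y))).sum
      = (List.zipWith (fun (s : ℕ) (a : ℤ) => (s : ℤ) * a) T A).sum * y := by
  intro T
  induction T with
  | nil => intro A y; simp
  | cons s T ih =>
    intro A y
    cases A with
    | nil => simp
    | cons a A' =>
      simp only [List.map_cons, List.zipWith_cons_cons, List.sum_cons, ih A' y]
      ring

theorem bezout : ∀ L : List ℕ, ∃ A : List ℤ,
    (List.zipWith (fun (s : ℕ) (a : ℤ) => (s : ℤ) * a) L A).sum = (lgcd L : ℤ) := by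
  intro L
  induction L with
  | nil => exact ⟨[], by simp [lgcd]⟩
  | cons s T ih =>
    obtain ⟨A', hA'⟩ := ih
    refine ⟨Nat.gcdA s (lgcd T) :: A'.map (· * Nat.gcdB s (lgcd T)), ?_⟩
    simp only [List.zipWith_cons_cons, List.sum_cons]
    rw [zip_map_mul, hA']
    have h2 : lgcd (s :: T) = Nat.gcd s (lgcd T) := rfl
    rw [h2]
    have := Nat.gcd_eq_gcd_ab s (lgcd T)
    omega

theorem lgcd_coe : ∀ L : List ℕ, Multiset.gcd (↑L) = lgcd L := by
  intro L
  induction L with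
  | nil => simp [lgcd, Multiset.gcd]
  | cons s T ih =>
    have : ((s :: T : List ℕ) : Multiset ℕ) = s ::ₘ (↑T) := rfl
    rw [this, Multiset.gcd_cons, ih]
    rfl


end BF

section Easy
variable {k : Type} [Field k] [CharZero k] {n : ℕ} {μ : Nat.Partition n}

theorem prod_zpow_sum {G : Type} [CommGroup G] (a : G) {ι : Type} (s : Finset ι) (f : ι → ℤ) :
    ∏ i ∈ s, a ^ f i = a ^ (∑ i ∈ s, f i) := by
  induction s using Finset.cons_induction with
  | empty => simp
  | cons i s hi ih => rw [Finset.prod_cons, Finset.sum_cons, _root_.zpow_add, ih]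

theorem gcd_eq_lgcd (μ : Nat.Partition n) : μ.parts.gcd = BF.lgcd (partsList μ) := by
  rw [← BF.lgcd_coe]
  congr 1
  rw [partsList, Multiset.coe_reverse, Multiset.sort_eq]

theorem jordanMat_apply (i j : Fin n) : jordanMat k μ i j =
    if (j:ℕ) = (i:ℕ)+1 ∧ Ps μ (i:ℕ) + 1 < Sz μ (i:ℕ) then 1 else 0 := rfl

theorem hMat_apply (i j : Fin n) : hMat k μ i j =
    if i = j then (((Sz μ (i:ℕ) : ℤ) - 1 - 2 * (Ps μ (i:ℕ) : ℤ) : ℤ) : k) else 0 := rfl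

theorem yMat_apply (i j : Fin n) : yMat k μ i j =
    if (i:ℕ) = (j:ℕ)+1 ∧ Ps μ (j:ℕ) + 1 < Sz μ (j:ℕ) then
      (((Ps μ (j:ℕ) + 1) * (Sz μ (j:ℕ) - (Ps μ (j:ℕ) + 1)) : ℕ) : k) else 0 := rfl

theorem xi_succ (μ : Nat.Partition n) (A : List ℤ) {a : ℕ} (h : Ps μ a + 1 < Sz μ a) :
    BF.xi A (partsList μ) (a + 1) = BF.xi A (partsList μ) a := by
  have h2 := BF.xi_shift (partsList μ) A a (Ps μ a + 1) h
  have h3 : (blockFind (partsList μ) a).2 = Ps μ a := rfl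
  have h4 := ps_le μ a
  rwa [h3, show a - Ps μ a + (Ps μ a + 1) = a + 1 by omega] at h2

theorem easy (μ : Nat.Partition n) (c : k) (hc : c ≠ 0) :
    ∃ g : Matrix (Fin n) (Fin n) k, IsUnit g ∧
      g * jordanMat k μ = jordanMat k μ * g ∧
      g * hMat k μ = hMat k μ * g ∧
      g * yMat k μ = yMat k μ * g ∧ g.det = c ^ μ.parts.gcd := by
  obtain ⟨A, hA⟩ := BF.bezout (partsList μ)
  set u : kˣ := Units.mk0 c hc with hu
  set d : Fin n → kˣ := fun i => u ^ (BF.xi A (partsList μ) (i:ℕ)) with hd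
  have hval : ∀ (s : Finset (Fin n)), ∏ i ∈ s, ((d i : k)) = ((∏ i ∈ s, d i : kˣ) : k) :=
    fun s => (map_prod (Units.coeHom k) d s).symm
  refine ⟨Matrix.diagonal (fun i => ((d i : k))), ?_, ?_, ?_, ?_, ?_⟩
  case _ =>
    rw [Matrix.isUnit_iff_isUnit_det, Matrix.det_diagonal, hval]
    exact (∏ i : Fin n, d i).isUnit
  case _ =>
    ext i j
    rw [Matrix.diagonal_mul, Matrix.mul_diagonal, jordanMat_apply]
    by_cases hcond : (j : ℕ) = (i : ℕ) + 1 ∧ Ps μ (i:ℕ) + 1 < Sz μ (i:ℕ)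
    · have hdij : d i = d j := by
        rw [hd]
        simp only
        rw [hcond.1, xi_succ μ A hcond.2]
      rw [hdij, mul_comm]
    · rw [if_neg hcond, mul_zero, zero_mul]
  case _ =>
    ext i j
    rw [Matrix.diagonal_mul, Matrix.mul_diagonal]
    by_cases hij : i = j
    · subst hij
      rw [mul_comm]
    · rw [hMat_apply, if_neg hij, mul_zero, zero_mul]
  case _ =>
    ext i j
    rw [Matrix.diagonal_mul, Matrix.mul_diagonal, yMat_apply]
    by_cases hcond : (i : ℕ) = (j : ℕ) + 1 ∧ Ps μ (j:ℕ) + 1 < Sz μ (j:ℕ)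
    · have hdij : d i = d j := by
        rw [hd]
        simp only
        rw [hcond.1, xi_succ μ A hcond.2]
      rw [hdij, mul_comm]
    · rw [if_neg hcond, mul_zero, zero_mul]
  case _ =>
    rw [Matrix.det_diagonal, hval, hd]
    simp only
    rw [prod_zpow_sum, Fin.sum_univ_eq_sum_range]
    have hsum : ∑ i ∈ Finset.range n, BF.xi A (partsList μ) i = (BF.lgcd (partsList μ) : ℤ) := by
      have h1 := BF.xi_sum (partsList μ) A
      rw [partsList_sum] at h1
      rw [h1, hA]
    rw [hsum, gcd_eq_lgcd, zpow_natCast, Units.val_pow_eq_pow_val]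
    rfl

end Easy


/-- Over a field of characteristic zero, the set of determinants of invertible matrices
commuting with `J_μ`, `H_μ` and `Y_μ` is exactly the set of `m`-th powers in `kˣ`,
where `m = gcd(μ)`. -/
theorem stmt8 (k : Type) [Field k] [CharZero k] (n : ℕ) (hn : 2 ≤ n)
    (μ : Nat.Partition n) :
    {d : k | ∃ g : Matrix (Fin n) (Fin n) k, IsUnit g ∧
        g * jordanMat k μ = jordanMat k μ * g ∧
        g * hMat k μ = hMat k μ * g ∧
        g * yMat k μ = yMat k μ * g ∧ g.det = d} =
      {d : k | ∃ c : k, c ≠ 0 ∧ d = c ^ μ.parts.gcd} := by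
  ext d
  simp only [Set.mem_setOf_eq]
  constructor
  · rintro ⟨g, hg, hJ, hH, hY, rfl⟩
    exact hard hn hg hJ hH hY
  · rintro ⟨c, hc, rfl⟩
    obtain ⟨g, h1, h2, h3, h4, h5⟩ := easy μ c hc
    exact ⟨g, h1, h2, h3, h4, h5⟩
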